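/- There exist a positive integer L_Z and, for each of the eight nodes A1, A2, A3, A4, B1, B2, B3, B4, matrices F_v ∈ F_13^{9×7} and H_v ∈ F_13^{9×L_Z} with each H_v of full row rank 9, such that the correctness condition (with L = 7) holds for the eight pairs {A1,B1}, {A2,B1}, {A3,B1}, {A2,B2}, {A3,B2}, {A3,B3}, {A4,B3}, {A4,B4}, and the security condition holds for the five pairs {A1,B2}, {A1,B3}, {A2,B3}, {A2,B4}, {A3,B4}. Consequently the linear rate 7/18 is achievable for this CDS instance. -/

import Mathlib

open Matrix

/-- The row space of a matrix: the span of its rows in `Fin LZ → F`. -/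
noncomputable def rowSpan {F : Type} [Field F] {N LZ : ℕ}
    (H : Matrix (Fin N) (Fin LZ) F) : Submodule F (Fin LZ → F) :=
  Submodule.span F (Set.range H)

/-- Linear correctness condition for a (qualified) pair of nodes. -/
def CorrectPair (F : Type) [Field F] (L N LZ : ℕ)
    (Fv Fu : Matrix (Fin N) (Fin L) F) (Hv Hu : Matrix (Fin N) (Fin LZ) F) : Prop :=
  ∀ (k : ℕ) (Pv Pu : Matrix (Fin k) (Fin N) F),
    Pv * Hv = Pu * Hu →
    Pv.rank = Module.finrank F ↥(rowSpan Hv ⊓ rowSpan Hu) →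
    Pu.rank = Module.finrank F ↥(rowSpan Hv ⊓ rowSpan Hu) →
    (Pv * Fv - Pu * Fu).rank = L

/-- Linear security condition for an (unqualified) pair of nodes. -/
def SecurePair (F : Type) [Field F] (L N LZ : ℕ)
    (Fv Fu : Matrix (Fin N) (Fin L) F) (Hv Hu : Matrix (Fin N) (Fin LZ) F) : Prop :=
  ∀ (k : ℕ) (Pv Pu : Matrix (Fin k) (Fin N) F),
    Pv * Hv = Pu * Hu → Pv * Fv = Pu * Fu

instance : Fact (Nat.Prime 13) := ⟨by norm_num⟩

/-- The eight nodes of the CDS instance of Theorem 3. -/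
inductive Node8 : Type
  | A1 | A2 | A3 | A4 | B1 | B2 | B3 | B4

open Node8

abbrev K13 := ZMod 13

lemma secure_of_cert {LZ : ℕ} (Fv Fu : Matrix (Fin 9) (Fin 7) K13)
    (Hv Hu : Matrix (Fin 9) (Fin LZ) K13) (R : Matrix (Fin LZ) (Fin 7) K13)
    (hv : Hv * R = Fv) (hu : Hu * R = Fu) : SecurePair K13 7 9 LZ Fv Fu Hv Hu := by
  intro k Pv Pu h
  rw [← hv, ← hu, ← Matrix.mul_assoc, ← Matrix.mul_assoc, h]

lemma rank_nine {LZ : ℕ} (H : Matrix (Fin 9) (Fin LZ) K13)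
    (H' : Matrix (Fin LZ) (Fin 9) K13) (h : H * H' = 1) : H.rank = 9 := by
  refine le_antisymm ?_ ?_
  · simpa using H.rank_le_card_height
  · calc (9 : ℕ) = (1 : Matrix (Fin 9) (Fin 9) K13).rank := by simp [Matrix.rank_one]
      _ = (H * H').rank := by rw [h]
      _ ≤ H.rank := Matrix.rank_mul_le_left _ _

lemma row_mul {m n k : ℕ} (A : Matrix (Fin m) (Fin n) K13) (B : Matrix (Fin n) (Fin k) K13)
    (i : Fin m) : (A * B) i = ∑ j, A i j • B j := by
  funext l
  simp [Matrix.mul_apply, Finset.sum_apply]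

lemma rowSpan_mul_le {m n k : ℕ} (A : Matrix (Fin m) (Fin n) K13)
    (B : Matrix (Fin n) (Fin k) K13) : rowSpan (A * B) ≤ rowSpan B := by
  rw [rowSpan, Submodule.span_le]
  rintro x ⟨i, rfl⟩
  rw [row_mul]
  exact Submodule.sum_mem _ fun j _ =>
    Submodule.smul_mem _ _ (Submodule.subset_span ⟨j, rfl⟩)

lemma cancel_right {a LZ : ℕ} (X Y : Matrix (Fin a) (Fin 9) K13)
    (H : Matrix (Fin 9) (Fin LZ) K13) (H' : Matrix (Fin LZ) (Fin 9) K13)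
    (hinv : H * H' = 1) (h : X * H = Y * H) : X = Y := by
  have : X * (H * H') = Y * (H * H') := by
    rw [← Matrix.mul_assoc, ← Matrix.mul_assoc, h]
  rwa [hinv, Matrix.mul_one, Matrix.mul_one] at this

lemma correct_of_cert {LZ : ℕ} (Fv Fu : Matrix (Fin 9) (Fin 7) K13)
    (Hv Hu : Matrix (Fin 9) (Fin LZ) K13)
    (Hv' Hu' : Matrix (Fin LZ) (Fin 9) K13)
    (Cv Cu : Matrix (Fin 7) (Fin 9) K13)
    (hv : Hv * Hv' = 1) (hu : Hu * Hu' = 1)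
    (hC : Cv * Hv = Cu * Hu) (hE : Cv * Fv - Cu * Fu = 1) :
    CorrectPair K13 7 9 LZ Fv Fu Hv Hu := by
  intro k Pv Pu hP hrv _
  -- row span of Pv * Hv equals the intersection
  have hrank : (Pv * Hv).rank = Pv.rank := by
    refine le_antisymm (Matrix.rank_mul_le_left _ _) ?_
    have : Pv = (Pv * Hv) * Hv' := by rw [Matrix.mul_assoc, hv, Matrix.mul_one]
    calc Pv.rank = ((Pv * Hv) * Hv').rank := by rw [← this]
      _ ≤ (Pv * Hv).rank := Matrix.rank_mul_le_left _ _
  have hWQ : rowSpan (Pv * Hv) = rowSpan Hv ⊓ rowSpan Hu := by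
    refine Submodule.eq_of_le_of_finrank_eq
      (le_inf (rowSpan_mul_le _ _) (hP ▸ rowSpan_mul_le Pu Hu)) ?_
    rw [show Module.finrank K13 ↥(rowSpan (Pv * Hv))
        = (Pv * Hv).rank from ((Pv * Hv).rank_eq_finrank_span_row).symm,
      hrank, hrv]
  have hrow : ∀ i, (Cv * Hv) i ∈ rowSpan (Pv * Hv) := by
    intro i
    rw [hWQ]
    refine Submodule.mem_inf.mpr ⟨?_, ?_⟩
    · exact rowSpan_mul_le Cv Hv (Submodule.subset_span ⟨i, rfl⟩)
    · have : (Cv * Hv) i = (Cu * Hu) i := by rw [hC]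
      rw [this]
      exact rowSpan_mul_le Cu Hu (Submodule.subset_span ⟨i, rfl⟩)
  have hex : ∀ i, ∃ c : Fin k → K13, ∑ j, c j • (Pv * Hv) j = (Cv * Hv) i := by
    intro i
    have := hrow i
    rw [rowSpan] at this
    exact (Submodule.mem_span_range_iff_exists_fun K13).mp this
  choose c hc using hex
  set T : Matrix (Fin 7) (Fin k) K13 := Matrix.of c with hT
  have hTQ : T * (Pv * Hv) = Cv * Hv := by
    funext i l
    have := congrFun (hc i) l
    simpa [row_mul T (Pv * Hv) i, Finset.sum_apply, T] using this
  have hTPv : T * Pv = Cv := by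
    apply cancel_right _ _ Hv Hv' hv
    rw [Matrix.mul_assoc, hTQ]
  have hTPu : T * Pu = Cu := by
    apply cancel_right _ _ Hu Hu' hu
    rw [Matrix.mul_assoc, ← hP, ← Matrix.mul_assoc, hTPv, hC]
  have key : T * (Pv * Fv - Pu * Fu) = 1 := by
    rw [Matrix.mul_sub, ← Matrix.mul_assoc, ← Matrix.mul_assoc, hTPv, hTPu, hE]
  refine le_antisymm ?_ ?_
  · simpa using (Pv * Fv - Pu * Fu).rank_le_card_width
  · calc (7 : ℕ) = (1 : Matrix (Fin 7) (Fin 7) K13).rank := by simp [Matrix.rank_one]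
      _ = (T * (Pv * Fv - Pu * Fu)).rank := by rw [key]
      _ ≤ (Pv * Fv - Pu * Fu).rank := Matrix.rank_mul_le_right _ _

def mF_A1 : Matrix (Fin 9) (Fin 7) (ZMod 13) := !![(8 : ZMod 13), 11, 4, 6, 12, 0, 8;
    1, 1, 6, 12, 0, 3, 1;
    11, 5, 9, 6, 4, 4, 9;
    2, 2, 0, 7, 9, 12, 1;
    8, 3, 9, 4, 12, 8, 12;
    11, 0, 9, 4, 12, 1, 8;
    7, 5, 7, 11, 3, 11, 12;
    4, 2, 10, 4, 1, 6, 10;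
    12, 6, 5, 8, 9, 11, 12]

def mH_A1 : Matrix (Fin 9) (Fin 13) (ZMod 13) := !![(7 : ZMod 13), 7, 12, 10, 11, 5, 2, 9, 10, 4, 11, 1, 4;
    6, 0, 10, 2, 6, 8, 10, 2, 2, 1, 10, 8, 0;
    4, 8, 9, 1, 9, 11, 4, 8, 1, 12, 2, 2, 2;
    2, 8, 11, 5, 9, 6, 8, 5, 11, 12, 1, 8, 7;
    11, 2, 12, 5, 6, 10, 5, 2, 6, 2, 12, 5, 0;
    10, 8, 11, 0, 3, 10, 11, 1, 8, 3, 9, 12, 9;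
    9, 9, 11, 1, 6, 4, 3, 7, 9, 5, 7, 9, 2;
    3, 5, 0, 1, 8, 4, 12, 6, 10, 3, 7, 3, 3;
    7, 6, 7, 0, 3, 6, 7, 3, 10, 6, 3, 7, 3]

def mHi_A1 : Matrix (Fin 13) (Fin 9) (ZMod 13) := !![(7 : ZMod 13), 9, 12, 12, 12, 12, 5, 9, 5;
    8, 6, 7, 3, 0, 9, 6, 10, 11;
    7, 2, 3, 1, 5, 5, 9, 1, 5;
    2, 6, 11, 1, 9, 3, 6, 6, 4;
    6, 2, 7, 3, 5, 11, 9, 10, 0;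
    0, 8, 11, 7, 10, 0, 10, 8, 3;
    4, 7, 4, 2, 5, 6, 8, 3, 0;
    11, 7, 2, 11, 6, 10, 6, 4, 5;
    10, 1, 7, 4, 0, 6, 3, 11, 4;
    0, 0, 0, 0, 0, 0, 0, 0, 0;
    0, 0, 0, 0, 0, 0, 0, 0, 0;
    0, 0, 0, 0, 0, 0, 0, 0, 0;
    0, 0, 0, 0, 0, 0, 0, 0, 0]

def mF_A2 : Matrix (Fin 9) (Fin 7) (ZMod 13) := !![(7 : ZMod 13), 1, 11, 7, 8, 4, 7;
    0, 4, 1, 7, 1, 2, 6;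
    10, 5, 3, 10, 12, 6, 11;
    0, 4, 1, 5, 7, 12, 3;
    7, 7, 11, 3, 0, 0, 5;
    2, 3, 9, 4, 0, 3, 3;
    3, 1, 8, 2, 7, 7, 9;
    9, 3, 6, 3, 3, 1, 12;
    9, 3, 0, 0, 7, 7, 3]

def mH_A2 : Matrix (Fin 9) (Fin 13) (ZMod 13) := !![(0 : ZMod 13), 0, 4, 0, 4, 8, 5, 7, 1, 8, 5, 7, 1;
    3, 3, 9, 5, 6, 2, 9, 12, 9, 9, 6, 1, 12;
    0, 7, 0, 12, 2, 1, 12, 6, 6, 9, 2, 5, 10;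
    12, 11, 1, 10, 8, 10, 10, 10, 9, 3, 8, 5, 0;
    1, 12, 1, 9, 8, 11, 0, 7, 12, 9, 11, 10, 2;
    3, 12, 6, 12, 7, 10, 0, 3, 12, 7, 0, 7, 2;
    11, 11, 3, 3, 6, 5, 3, 6, 0, 8, 1, 2, 3;
    0, 0, 4, 4, 3, 8, 3, 12, 3, 6, 4, 2, 5;
    2, 0, 9, 4, 1, 6, 12, 12, 12, 6, 3, 8, 0]

def mHi_A2 : Matrix (Fin 13) (Fin 9) (ZMod 13) := !![(10 : ZMod 13), 6, 3, 0, 6, 6, 7, 9, 6;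
    5, 3, 10, 2, 8, 1, 0, 11, 4;
    6, 5, 0, 0, 5, 10, 0, 10, 1;
    9, 11, 0, 12, 12, 7, 8, 6, 7;
    6, 1, 0, 9, 5, 3, 8, 11, 4;
    9, 8, 1, 2, 7, 6, 7, 5, 3;
    2, 7, 11, 1, 9, 11, 12, 10, 7;
    9, 12, 11, 3, 9, 2, 9, 11, 11;
    3, 1, 3, 0, 4, 0, 10, 9, 0;
    0, 0, 0, 0, 0, 0, 0, 0, 0;
    0, 0, 0, 0, 0, 0, 0, 0, 0;
    0, 0, 0, 0, 0, 0, 0, 0, 0;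
    0, 0, 0, 0, 0, 0, 0, 0, 0]

def mF_A3 : Matrix (Fin 9) (Fin 7) (ZMod 13) := !![(11 : ZMod 13), 9, 8, 0, 11, 11, 12;
    5, 5, 11, 5, 11, 6, 3;
    0, 12, 9, 4, 6, 12, 11;
    8, 7, 3, 11, 7, 2, 6;
    9, 11, 0, 3, 2, 7, 12;
    11, 12, 12, 0, 5, 12, 9;
    0, 11, 7, 9, 2, 11, 5;
    3, 7, 8, 12, 10, 10, 7;
    2, 1, 6, 11, 11, 7, 5]

def mH_A3 : Matrix (Fin 9) (Fin 13) (ZMod 13) := !![(8 : ZMod 13), 11, 7, 3, 8, 1, 6, 3, 0, 3, 3, 11, 10;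
    4, 8, 11, 4, 0, 0, 5, 5, 3, 8, 12, 0, 7;
    11, 0, 6, 9, 0, 0, 5, 2, 8, 11, 1, 4, 10;
    10, 3, 1, 7, 2, 1, 6, 10, 3, 11, 8, 7, 5;
    9, 3, 1, 12, 0, 12, 1, 7, 9, 12, 5, 11, 7;
    6, 9, 7, 1, 5, 7, 0, 1, 7, 8, 6, 7, 9;
    11, 6, 6, 10, 12, 7, 10, 9, 6, 4, 2, 5, 6;
    0, 0, 4, 4, 3, 8, 3, 12, 3, 6, 4, 2, 5;
    1, 12, 8, 2, 5, 2, 2, 11, 2, 5, 7, 5, 4]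

def mHi_A3 : Matrix (Fin 13) (Fin 9) (ZMod 13) := !![(5 : ZMod 13), 2, 7, 3, 1, 6, 7, 8, 10;
    6, 8, 0, 11, 11, 8, 5, 3, 11;
    11, 7, 12, 2, 5, 5, 3, 8, 1;
    3, 4, 3, 7, 5, 11, 10, 7, 0;
    8, 3, 10, 4, 7, 3, 7, 7, 6;
    0, 3, 4, 11, 6, 1, 7, 0, 9;
    4, 8, 0, 1, 7, 9, 3, 10, 10;
    11, 11, 9, 6, 1, 1, 10, 3, 0;
    12, 9, 10, 12, 9, 12, 5, 12, 2;
    0, 0, 0, 0, 0, 0, 0, 0, 0;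
    0, 0, 0, 0, 0, 0, 0, 0, 0;
    0, 0, 0, 0, 0, 0, 0, 0, 0;
    0, 0, 0, 0, 0, 0, 0, 0, 0]

def mF_A4 : Matrix (Fin 9) (Fin 7) (ZMod 13) := !![(5 : ZMod 13), 5, 2, 5, 8, 3, 3;
    6, 10, 12, 10, 9, 9, 4;
    2, 0, 11, 12, 8, 12, 11;
    4, 11, 6, 4, 12, 6, 10;
    10, 7, 0, 2, 5, 7, 3;
    8, 9, 7, 6, 12, 1, 6;
    7, 12, 6, 3, 5, 6, 9;
    1, 1, 0, 5, 7, 0, 12;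
    9, 12, 2, 0, 10, 11, 7]

def mH_A4 : Matrix (Fin 9) (Fin 13) (ZMod 13) := !![(11 : ZMod 13), 10, 2, 1, 9, 12, 1, 0, 3, 10, 1, 2, 0;
    9, 8, 6, 0, 11, 4, 1, 1, 7, 1, 1, 1, 11;
    9, 12, 6, 6, 12, 10, 4, 5, 11, 3, 8, 1, 5;
    6, 10, 12, 11, 7, 5, 12, 3, 11, 4, 12, 3, 0;
    1, 6, 7, 11, 1, 11, 3, 5, 9, 7, 11, 5, 0;
    8, 10, 5, 12, 0, 3, 6, 6, 3, 10, 6, 4, 12;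
    0, 8, 10, 9, 10, 0, 0, 1, 2, 0, 10, 12, 2;
    4, 7, 8, 1, 6, 2, 2, 4, 8, 6, 8, 10, 4;
    6, 5, 2, 6, 0, 6, 0, 4, 10, 0, 4, 12, 2]

def mHi_A4 : Matrix (Fin 13) (Fin 9) (ZMod 13) := !![(1 : ZMod 13), 0, 0, 8, 4, 0, 5, 4, 0;
    10, 11, 3, 11, 11, 5, 5, 3, 2;
    4, 2, 7, 10, 5, 11, 2, 6, 6;
    8, 12, 6, 1, 8, 4, 6, 0, 7;
    2, 4, 0, 10, 5, 6, 7, 9, 11;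
    8, 7, 5, 3, 11, 7, 8, 5, 4;
    2, 5, 9, 11, 1, 7, 6, 1, 4;
    10, 11, 5, 1, 8, 1, 8, 4, 12;
    6, 3, 8, 7, 9, 0, 2, 2, 6;
    0, 0, 0, 0, 0, 0, 0, 0, 0;
    0, 0, 0, 0, 0, 0, 0, 0, 0;
    0, 0, 0, 0, 0, 0, 0, 0, 0;
    0, 0, 0, 0, 0, 0, 0, 0, 0]

def mF_B1 : Matrix (Fin 9) (Fin 7) (ZMod 13) := !![(1 : ZMod 13), 6, 2, 3, 6, 4, 11;
    7, 9, 7, 9, 6, 12, 12;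
    11, 8, 1, 0, 3, 12, 9;
    8, 0, 4, 2, 7, 8, 11;
    11, 10, 6, 9, 8, 2, 3;
    4, 2, 1, 7, 9, 9, 8;
    4, 9, 6, 5, 3, 4, 2;
    7, 6, 10, 11, 3, 1, 2;
    7, 0, 11, 10, 9, 11, 0]

def mH_B1 : Matrix (Fin 9) (Fin 13) (ZMod 13) := !![(3 : ZMod 13), 4, 1, 11, 6, 7, 2, 1, 1, 0, 6, 8, 4;
    12, 12, 0, 3, 8, 8, 5, 4, 12, 2, 1, 4, 3;
    0, 10, 12, 4, 12, 4, 3, 2, 4, 4, 10, 11, 5;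
    1, 9, 5, 10, 6, 8, 3, 2, 3, 7, 4, 1, 8;
    4, 0, 4, 9, 11, 4, 12, 8, 3, 6, 6, 9, 4;
    6, 7, 2, 3, 4, 4, 12, 0, 1, 0, 7, 10, 4;
    8, 8, 10, 7, 11, 5, 2, 10, 3, 1, 6, 3, 10;
    10, 7, 4, 2, 5, 6, 11, 9, 5, 10, 8, 3, 5;
    1, 0, 11, 3, 4, 12, 9, 9, 3, 1, 5, 2, 4]

def mHi_B1 : Matrix (Fin 13) (Fin 9) (ZMod 13) := !![(12 : ZMod 13), 8, 12, 1, 9, 12, 7, 6, 8;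
    7, 3, 4, 9, 9, 2, 6, 2, 0;
    3, 11, 4, 2, 6, 11, 9, 0, 7;
    12, 9, 1, 10, 2, 12, 7, 1, 12;
    11, 8, 10, 5, 11, 2, 11, 6, 0;
    10, 8, 11, 10, 9, 11, 11, 12, 9;
    4, 5, 10, 2, 12, 11, 0, 4, 6;
    5, 8, 0, 10, 11, 3, 2, 8, 7;
    4, 5, 10, 8, 5, 11, 10, 9, 2;
    0, 0, 0, 0, 0, 0, 0, 0, 0;
    0, 0, 0, 0, 0, 0, 0, 0, 0;
    0, 0, 0, 0, 0, 0, 0, 0, 0;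
    0, 0, 0, 0, 0, 0, 0, 0, 0]

def mF_B2 : Matrix (Fin 9) (Fin 7) (ZMod 13) := !![(3 : ZMod 13), 1, 12, 8, 9, 8, 4;
    9, 8, 3, 3, 3, 1, 8;
    8, 9, 6, 9, 8, 2, 7;
    10, 6, 9, 5, 11, 1, 12;
    5, 11, 11, 8, 3, 0, 7;
    9, 9, 4, 8, 3, 10, 4;
    8, 1, 1, 8, 8, 9, 5;
    5, 9, 1, 6, 3, 4, 12;
    11, 9, 9, 10, 2, 1, 7]

def mH_B2 : Matrix (Fin 9) (Fin 13) (ZMod 13) := !![(8 : ZMod 13), 0, 11, 2, 0, 10, 3, 10, 5, 9, 5, 4, 5;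
    4, 1, 8, 1, 7, 12, 2, 2, 9, 8, 7, 9, 6;
    11, 9, 7, 8, 1, 8, 8, 1, 8, 10, 5, 7, 0;
    3, 6, 4, 5, 3, 12, 5, 4, 5, 8, 10, 2, 8;
    2, 10, 0, 10, 0, 9, 1, 0, 0, 9, 5, 8, 2;
    5, 7, 12, 5, 5, 6, 3, 7, 9, 4, 8, 1, 8;
    8, 8, 6, 9, 1, 4, 3, 6, 7, 5, 12, 7, 7;
    6, 5, 4, 7, 4, 1, 11, 2, 5, 6, 2, 12, 6;
    7, 9, 1, 12, 11, 10, 12, 0, 3, 1, 5, 2, 5]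

def mHi_B2 : Matrix (Fin 13) (Fin 9) (ZMod 13) := !![(3 : ZMod 13), 5, 11, 3, 6, 1, 4, 5, 3;
    10, 1, 5, 6, 7, 10, 4, 11, 12;
    5, 5, 11, 1, 2, 10, 4, 0, 6;
    3, 3, 5, 3, 11, 5, 12, 11, 6;
    12, 3, 6, 5, 7, 5, 2, 11, 4;
    12, 2, 3, 11, 8, 6, 10, 0, 6;
    3, 10, 7, 0, 10, 2, 2, 4, 7;
    10, 11, 7, 12, 6, 3, 7, 4, 1;
    5, 5, 10, 3, 10, 2, 2, 11, 3;
    0, 0, 0, 0, 0, 0, 0, 0, 0;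
    0, 0, 0, 0, 0, 0, 0, 0, 0;
    0, 0, 0, 0, 0, 0, 0, 0, 0;
    0, 0, 0, 0, 0, 0, 0, 0, 0]

def mF_B3 : Matrix (Fin 9) (Fin 7) (ZMod 13) := !![(7 : ZMod 13), 5, 11, 6, 7, 7, 7;
    9, 12, 11, 2, 8, 3, 12;
    11, 11, 10, 6, 10, 4, 5;
    1, 0, 10, 6, 2, 9, 12;
    2, 4, 9, 4, 6, 4, 9;
    3, 2, 4, 9, 2, 1, 11;
    8, 2, 1, 4, 2, 7, 7;
    12, 3, 1, 11, 5, 8, 0;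
    7, 8, 6, 0, 10, 7, 2]

def mH_B3 : Matrix (Fin 9) (Fin 13) (ZMod 13) := !![(10 : ZMod 13), 3, 12, 5, 1, 1, 5, 9, 8, 2, 1, 1, 0;
    2, 2, 12, 11, 8, 7, 5, 11, 10, 6, 3, 5, 6;
    7, 9, 0, 10, 1, 8, 10, 9, 7, 10, 7, 7, 12;
    7, 3, 12, 0, 7, 8, 2, 4, 11, 9, 0, 5, 7;
    8, 6, 2, 7, 5, 11, 7, 9, 10, 6, 0, 10, 2;
    1, 4, 4, 4, 6, 4, 9, 4, 11, 7, 4, 12, 5;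
    0, 7, 11, 0, 4, 6, 10, 9, 12, 6, 3, 1, 9;
    7, 6, 9, 0, 4, 2, 8, 7, 11, 8, 9, 5, 6;
    6, 9, 0, 2, 8, 1, 7, 10, 5, 9, 12, 4, 1]

def mHi_B3 : Matrix (Fin 13) (Fin 9) (ZMod 13) := !![(10 : ZMod 13), 10, 3, 9, 12, 4, 6, 3, 11;
    10, 2, 11, 8, 5, 5, 5, 0, 5;
    6, 3, 2, 12, 7, 7, 12, 12, 11;
    9, 10, 3, 7, 6, 6, 8, 5, 5;
    12, 9, 10, 11, 1, 10, 2, 8, 3;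
    2, 11, 4, 4, 11, 4, 1, 8, 11;
    8, 8, 9, 7, 2, 0, 7, 8, 1;
    9, 3, 4, 0, 8, 7, 10, 3, 3;
    6, 9, 3, 1, 1, 5, 2, 7, 11;
    0, 0, 0, 0, 0, 0, 0, 0, 0;
    0, 0, 0, 0, 0, 0, 0, 0, 0;
    0, 0, 0, 0, 0, 0, 0, 0, 0;
    0, 0, 0, 0, 0, 0, 0, 0, 0]

def mF_B4 : Matrix (Fin 9) (Fin 7) (ZMod 13) := !![(11 : ZMod 13), 6, 11, 10, 1, 9, 11;
    1, 9, 8, 10, 2, 6, 7;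
    10, 10, 11, 10, 3, 12, 11;
    6, 0, 8, 4, 8, 10, 3;
    5, 3, 1, 10, 3, 9, 9;
    0, 8, 9, 9, 9, 11, 11;
    9, 1, 9, 10, 6, 4, 9;
    4, 9, 9, 9, 0, 12, 2;
    3, 10, 0, 4, 2, 12, 0]

def mH_B4 : Matrix (Fin 9) (Fin 13) (ZMod 13) := !![(5 : ZMod 13), 4, 3, 8, 2, 9, 6, 9, 11, 12, 10, 4, 10;
    6, 2, 0, 6, 3, 11, 12, 6, 9, 7, 2, 1, 0;
    6, 0, 0, 12, 3, 3, 5, 11, 11, 4, 4, 4, 6;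
    8, 4, 6, 0, 8, 12, 0, 1, 1, 3, 2, 7, 12;
    6, 8, 0, 1, 0, 10, 12, 1, 5, 10, 9, 12, 6;
    0, 8, 1, 4, 4, 5, 9, 7, 0, 6, 11, 5, 5;
    3, 0, 3, 9, 8, 11, 4, 0, 3, 11, 6, 7, 12;
    7, 8, 8, 9, 11, 3, 0, 3, 10, 1, 5, 12, 9;
    2, 11, 4, 1, 8, 8, 0, 1, 3, 9, 4, 9, 0]

def mHi_B4 : Matrix (Fin 13) (Fin 9) (ZMod 13) := !![(2 : ZMod 13), 2, 9, 11, 4, 3, 0, 0, 4;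
    11, 10, 2, 7, 4, 8, 12, 6, 7;
    10, 12, 11, 5, 11, 2, 5, 5, 10;
    0, 10, 3, 0, 1, 4, 3, 8, 10;
    10, 4, 4, 5, 1, 5, 9, 6, 4;
    8, 9, 10, 4, 4, 10, 5, 0, 11;
    1, 12, 8, 0, 5, 1, 7, 4, 2;
    3, 9, 10, 6, 2, 5, 7, 9, 0;
    0, 9, 4, 8, 10, 1, 4, 6, 2;
    0, 0, 0, 0, 0, 0, 0, 0, 0;
    0, 0, 0, 0, 0, 0, 0, 0, 0;
    0, 0, 0, 0, 0, 0, 0, 0, 0;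
    0, 0, 0, 0, 0, 0, 0, 0, 0]

lemma hinv_A1 : mH_A1 * mHi_A1 = 1 := by decide

lemma hinv_A2 : mH_A2 * mHi_A2 = 1 := by decide

lemma hinv_A3 : mH_A3 * mHi_A3 = 1 := by decide

lemma hinv_A4 : mH_A4 * mHi_A4 = 1 := by decide

lemma hinv_B1 : mH_B1 * mHi_B1 = 1 := by decide

lemma hinv_B2 : mH_B2 * mHi_B2 = 1 := by decide

lemma hinv_B3 : mH_B3 * mHi_B3 = 1 := by decide

lemma hinv_B4 : mH_B4 * mHi_B4 = 1 := by decide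

def mR_A1B2 : Matrix (Fin 13) (Fin 7) (ZMod 13) := !![(7 : ZMod 13), 2, 5, 11, 10, 12, 2;
    2, 5, 3, 8, 9, 8, 5;
    10, 12, 8, 3, 12, 5, 5;
    9, 7, 3, 5, 12, 3, 10;
    5, 0, 0, 1, 6, 8, 6;
    3, 1, 7, 7, 3, 0, 2;
    3, 5, 11, 12, 5, 8, 0;
    4, 11, 11, 0, 8, 11, 2;
    4, 7, 5, 9, 7, 4, 0;
    11, 8, 7, 11, 5, 12, 9;
    0, 6, 8, 12, 12, 11, 4;
    2, 12, 1, 7, 8, 3, 6;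
    11, 0, 8, 4, 7, 11, 12]

def mR_A1B3 : Matrix (Fin 13) (Fin 7) (ZMod 13) := !![(4 : ZMod 13), 9, 3, 6, 1, 8, 4;
    0, 0, 10, 2, 4, 1, 8;
    1, 9, 8, 10, 4, 9, 3;
    11, 7, 8, 9, 1, 2, 7;
    0, 0, 7, 2, 4, 3, 2;
    11, 4, 0, 0, 8, 2, 11;
    3, 10, 7, 2, 4, 2, 11;
    0, 5, 4, 7, 5, 4, 9;
    4, 9, 8, 8, 7, 5, 2;
    9, 4, 12, 4, 12, 12, 6;
    11, 5, 2, 6, 1, 0, 8;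
    8, 4, 11, 12, 8, 3, 12;
    2, 10, 2, 9, 12, 7, 10]

def mR_A2B3 : Matrix (Fin 13) (Fin 7) (ZMod 13) := !![(0 : ZMod 13), 7, 11, 1, 1, 11, 5;
    12, 4, 0, 11, 6, 12, 4;
    4, 3, 7, 4, 12, 0, 2;
    0, 0, 0, 3, 0, 3, 2;
    6, 8, 7, 12, 6, 4, 5;
    4, 0, 8, 5, 1, 2, 2;
    11, 3, 7, 12, 1, 3, 3;
    6, 8, 7, 7, 1, 7, 5;
    0, 2, 5, 3, 1, 7, 2;
    0, 4, 5, 8, 2, 1, 0;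
    9, 12, 7, 2, 7, 6, 11;
    3, 3, 11, 4, 3, 10, 12;
    6, 5, 1, 1, 12, 1, 6]

def mR_A2B4 : Matrix (Fin 13) (Fin 7) (ZMod 13) := !![(5 : ZMod 13), 5, 1, 9, 2, 2, 4;
    7, 11, 8, 0, 3, 1, 11;
    8, 0, 7, 12, 0, 3, 3;
    3, 9, 0, 9, 4, 10, 2;
    7, 7, 2, 0, 6, 0, 3;
    3, 4, 7, 8, 7, 8, 8;
    3, 6, 11, 2, 0, 6, 10;
    7, 12, 10, 7, 2, 2, 2;
    0, 1, 8, 1, 6, 6, 7;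
    7, 4, 0, 8, 4, 9, 10;
    2, 3, 4, 3, 10, 6, 7;
    1, 2, 8, 2, 11, 8, 2;
    7, 12, 9, 2, 9, 6, 5]

def mR_A3B4 : Matrix (Fin 13) (Fin 7) (ZMod 13) := !![(4 : ZMod 13), 1, 12, 1, 7, 3, 7;
    9, 10, 10, 6, 8, 4, 3;
    9, 12, 10, 11, 10, 7, 8;
    2, 9, 12, 7, 8, 10, 7;
    12, 7, 11, 4, 3, 1, 12;
    1, 1, 11, 6, 4, 1, 0;
    4, 1, 7, 6, 6, 9, 10;
    2, 12, 2, 6, 5, 5, 12;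
    0, 2, 6, 1, 10, 6, 3;
    5, 3, 9, 4, 1, 3, 2;
    7, 2, 7, 6, 8, 5, 4;
    12, 4, 9, 1, 5, 8, 4;
    1, 9, 0, 2, 8, 9, 6]

def mCv_A1B1 : Matrix (Fin 7) (Fin 9) (ZMod 13) := !![(3 : ZMod 13), 3, 8, 9, 5, 2, 4, 0, 0;
    3, 11, 2, 0, 3, 5, 12, 0, 0;
    6, 7, 0, 6, 11, 10, 11, 0, 0;
    6, 10, 6, 3, 2, 5, 12, 0, 0;
    4, 12, 2, 3, 3, 6, 6, 0, 0;
    3, 2, 11, 12, 9, 0, 8, 0, 0;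
    3, 1, 4, 7, 10, 6, 1, 0, 0]

def mCu_A1B1 : Matrix (Fin 7) (Fin 9) (ZMod 13) := !![(6 : ZMod 13), 4, 12, 8, 3, 9, 0, 5, 10;
    5, 6, 1, 12, 8, 7, 6, 2, 6;
    10, 5, 2, 7, 8, 12, 6, 4, 10;
    10, 10, 9, 7, 10, 3, 4, 8, 11;
    11, 12, 5, 5, 12, 11, 0, 9, 5;
    10, 12, 7, 7, 5, 11, 5, 8, 2;
    9, 12, 12, 7, 10, 0, 9, 9, 12]

def mCv_A2B1 : Matrix (Fin 7) (Fin 9) (ZMod 13) := !![(6 : ZMod 13), 6, 2, 9, 8, 0, 12, 0, 0;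
    0, 7, 6, 6, 8, 4, 0, 0, 0;
    11, 5, 10, 5, 5, 2, 12, 0, 0;
    0, 5, 5, 11, 0, 7, 5, 0, 0;
    8, 7, 9, 3, 5, 4, 11, 0, 0;
    1, 1, 10, 0, 8, 10, 8, 0, 0;
    5, 9, 11, 8, 8, 5, 1, 0, 0]

def mCu_A2B1 : Matrix (Fin 7) (Fin 9) (ZMod 13) := !![(7 : ZMod 13), 4, 4, 3, 8, 0, 10, 12, 1;
    6, 12, 2, 2, 3, 1, 1, 0, 1;
    2, 2, 11, 10, 7, 7, 10, 3, 11;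
    4, 11, 5, 5, 10, 5, 1, 9, 10;
    1, 2, 9, 1, 11, 8, 10, 10, 12;
    10, 3, 1, 11, 5, 0, 10, 3, 0;
    0, 5, 11, 7, 4, 5, 1, 10, 1]

def mCv_A3B1 : Matrix (Fin 7) (Fin 9) (ZMod 13) := !![(10 : ZMod 13), 12, 5, 2, 2, 2, 5, 0, 0;
    7, 1, 6, 0, 2, 9, 7, 0, 0;
    5, 10, 6, 6, 0, 1, 11, 0, 0;
    11, 1, 12, 4, 5, 10, 0, 0, 0;
    5, 5, 3, 7, 6, 3, 11, 0, 0;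
    12, 9, 8, 4, 11, 9, 10, 0, 0;
    9, 5, 11, 7, 0, 5, 2, 0, 0]

def mCu_A3B1 : Matrix (Fin 7) (Fin 9) (ZMod 13) := !![(3 : ZMod 13), 3, 2, 11, 2, 5, 3, 2, 7;
    7, 10, 12, 1, 2, 12, 11, 11, 11;
    12, 0, 5, 6, 3, 1, 5, 6, 4;
    12, 4, 6, 11, 5, 9, 3, 3, 3;
    2, 1, 11, 4, 0, 9, 7, 1, 6;
    2, 5, 5, 0, 6, 9, 0, 2, 8;
    6, 12, 4, 8, 1, 12, 3, 9, 1]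

def mCv_A2B2 : Matrix (Fin 7) (Fin 9) (ZMod 13) := !![(2 : ZMod 13), 7, 10, 0, 2, 3, 7, 11, 3;
    9, 6, 11, 5, 1, 5, 11, 12, 7;
    10, 2, 8, 6, 4, 12, 4, 3, 3;
    8, 2, 3, 0, 2, 1, 12, 11, 12;
    7, 6, 11, 4, 7, 5, 9, 8, 8;
    0, 0, 1, 8, 1, 2, 1, 8, 1;
    4, 11, 9, 8, 2, 10, 0, 10, 7]

def mCu_A2B2 : Matrix (Fin 7) (Fin 9) (ZMod 13) := !![(12 : ZMod 13), 12, 4, 9, 7, 7, 9, 0, 0;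
    12, 1, 10, 5, 7, 3, 5, 0, 0;
    2, 11, 2, 5, 8, 7, 9, 0, 0;
    8, 3, 6, 8, 2, 4, 2, 0, 0;
    2, 9, 1, 5, 6, 9, 2, 0, 0;
    1, 4, 7, 5, 5, 9, 11, 0, 0;
    8, 6, 7, 1, 12, 10, 3, 0, 0]

def mCv_A3B2 : Matrix (Fin 7) (Fin 9) (ZMod 13) := !![(3 : ZMod 13), 1, 10, 9, 5, 2, 9, 5, 3;
    12, 8, 0, 7, 12, 8, 10, 11, 5;
    3, 7, 11, 12, 12, 1, 10, 12, 11;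
    12, 3, 4, 8, 6, 1, 11, 11, 8;
    6, 3, 2, 9, 5, 1, 1, 12, 12;
    8, 4, 9, 10, 9, 8, 11, 4, 12;
    2, 8, 5, 9, 2, 5, 12, 7, 7]

def mCu_A3B2 : Matrix (Fin 7) (Fin 9) (ZMod 13) := !![(6 : ZMod 13), 11, 4, 3, 8, 0, 0, 8, 5;
    0, 4, 12, 4, 4, 0, 0, 12, 3;
    4, 6, 6, 8, 5, 0, 0, 8, 11;
    3, 1, 6, 7, 3, 0, 0, 3, 5;
    6, 12, 3, 0, 7, 0, 0, 5, 3;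
    10, 11, 5, 3, 10, 0, 0, 11, 1;
    10, 7, 12, 7, 6, 0, 0, 10, 3]

def mCv_A3B3 : Matrix (Fin 7) (Fin 9) (ZMod 13) := !![(12 : ZMod 13), 2, 5, 2, 7, 4, 10, 3, 8;
    5, 2, 4, 7, 2, 11, 11, 1, 11;
    3, 5, 4, 0, 6, 10, 3, 4, 6;
    12, 2, 5, 0, 1, 9, 6, 7, 9;
    10, 6, 4, 0, 8, 3, 4, 7, 12;
    8, 12, 3, 5, 9, 6, 0, 1, 5;
    6, 3, 6, 6, 7, 2, 6, 6, 2]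

def mCu_A3B3 : Matrix (Fin 7) (Fin 9) (ZMod 13) := !![(5 : ZMod 13), 10, 2, 7, 5, 3, 8, 0, 0;
    0, 1, 4, 3, 12, 10, 4, 0, 0;
    2, 8, 1, 0, 7, 12, 1, 0, 0;
    6, 3, 3, 4, 6, 4, 2, 0, 0;
    4, 2, 3, 5, 5, 11, 9, 0, 0;
    11, 4, 5, 1, 5, 0, 0, 0, 0;
    3, 9, 5, 12, 8, 7, 7, 0, 0]

def mCv_A4B3 : Matrix (Fin 7) (Fin 9) (ZMod 13) := !![(9 : ZMod 13), 0, 1, 5, 0, 10, 0, 0, 0;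
    7, 0, 4, 8, 8, 9, 8, 0, 0;
    12, 5, 2, 3, 10, 10, 5, 0, 0;
    2, 1, 10, 5, 5, 1, 12, 0, 0;
    0, 1, 6, 8, 2, 5, 3, 0, 0;
    7, 2, 3, 11, 12, 3, 2, 0, 0;
    5, 2, 8, 9, 4, 9, 11, 0, 0]

def mCu_A4B3 : Matrix (Fin 7) (Fin 9) (ZMod 13) := !![(9 : ZMod 13), 0, 10, 8, 5, 12, 3, 11, 7;
    9, 5, 0, 6, 0, 12, 4, 1, 9;
    10, 7, 7, 6, 7, 12, 5, 1, 6;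
    12, 1, 2, 5, 6, 4, 5, 12, 0;
    1, 12, 0, 11, 2, 4, 7, 12, 7;
    3, 12, 6, 4, 12, 8, 8, 3, 11;
    6, 6, 3, 10, 1, 1, 11, 1, 3]

def mCv_A4B4 : Matrix (Fin 7) (Fin 9) (ZMod 13) := !![(1 : ZMod 13), 12, 7, 2, 9, 9, 0, 10, 12;
    10, 5, 9, 6, 9, 4, 10, 4, 3;
    12, 12, 9, 12, 5, 8, 7, 0, 12;
    11, 3, 3, 3, 0, 6, 12, 9, 10;
    7, 8, 5, 7, 7, 1, 12, 8, 7;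
    11, 4, 3, 12, 4, 12, 4, 1, 9;
    5, 0, 12, 11, 2, 2, 12, 1, 8]

def mCu_A4B4 : Matrix (Fin 7) (Fin 9) (ZMod 13) := !![(3 : ZMod 13), 1, 11, 11, 9, 2, 5, 0, 0;
    12, 0, 0, 10, 9, 5, 12, 0, 0;
    2, 7, 3, 4, 0, 1, 1, 0, 0;
    7, 11, 10, 6, 8, 4, 5, 0, 0;
    1, 2, 11, 8, 7, 7, 2, 0, 0;
    0, 4, 10, 0, 7, 9, 5, 0, 0;
    3, 3, 4, 7, 10, 10, 3, 0, 0]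

def Fm8 : Node8 → Matrix (Fin 9) (Fin 7) (ZMod 13)
  | A1 => mF_A1
  | A2 => mF_A2
  | A3 => mF_A3
  | A4 => mF_A4
  | B1 => mF_B1
  | B2 => mF_B2
  | B3 => mF_B3
  | B4 => mF_B4
def Hm8 : Node8 → Matrix (Fin 9) (Fin 13) (ZMod 13)
  | A1 => mH_A1
  | A2 => mH_A2
  | A3 => mH_A3
  | A4 => mH_A4
  | B1 => mH_B1
  | B2 => mH_B2
  | B3 => mH_B3
  | B4 => mH_B4



set_option maxHeartbeats 8000000 in
/-- **Theorem 3, achievability half.** There is a linear CDS scheme over `𝔽₁₃`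
with secret length `L = 7` and signal length `N = 9` for the CDS instance on
nodes `A1, A2, A3, A4, B1, B2, B3, B4` with qualified edges
`{A1,B1}, {A2,B1}, {A3,B1}, {A2,B2}, {A3,B2}, {A3,B3}, {A4,B3}, {A4,B4}` and
unqualified edges `{A1,B2}, {A1,B3}, {A2,B3}, {A2,B4}, {A3,B4}`; hence the
linear rate `7/18` is achievable. -/
theorem cds_fig3_achievability :
    ∃ (LZ : ℕ), 0 < LZ ∧
      ∃ (Fm : Node8 → Matrix (Fin 9) (Fin 7) (ZMod 13))
        (Hm : Node8 → Matrix (Fin 9) (Fin LZ) (ZMod 13)),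
        (∀ v, (Hm v).rank = 9) ∧
        CorrectPair (ZMod 13) 7 9 LZ (Fm A1) (Fm B1) (Hm A1) (Hm B1) ∧
        CorrectPair (ZMod 13) 7 9 LZ (Fm A2) (Fm B1) (Hm A2) (Hm B1) ∧
        CorrectPair (ZMod 13) 7 9 LZ (Fm A3) (Fm B1) (Hm A3) (Hm B1) ∧
        CorrectPair (ZMod 13) 7 9 LZ (Fm A2) (Fm B2) (Hm A2) (Hm B2) ∧
        CorrectPair (ZMod 13) 7 9 LZ (Fm A3) (Fm B2) (Hm A3) (Hm B2) ∧
        CorrectPair (ZMod 13) 7 9 LZ (Fm A3) (Fm B3) (Hm A3) (Hm B3) ∧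
        CorrectPair (ZMod 13) 7 9 LZ (Fm A4) (Fm B3) (Hm A4) (Hm B3) ∧
        CorrectPair (ZMod 13) 7 9 LZ (Fm A4) (Fm B4) (Hm A4) (Hm B4) ∧
        SecurePair (ZMod 13) 7 9 LZ (Fm A1) (Fm B2) (Hm A1) (Hm B2) ∧
        SecurePair (ZMod 13) 7 9 LZ (Fm A1) (Fm B3) (Hm A1) (Hm B3) ∧
        SecurePair (ZMod 13) 7 9 LZ (Fm A2) (Fm B3) (Hm A2) (Hm B3) ∧
        SecurePair (ZMod 13) 7 9 LZ (Fm A2) (Fm B4) (Hm A2) (Hm B4) ∧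
        SecurePair (ZMod 13) 7 9 LZ (Fm A3) (Fm B4) (Hm A3) (Hm B4) := by
  refine ⟨13, by norm_num, Fm8, Hm8, ?_, ?_, ?_, ?_, ?_, ?_, ?_, ?_, ?_, ?_, ?_, ?_, ?_, ?_⟩
  · intro v
    cases v with
    | A1 => exact rank_nine _ mHi_A1 hinv_A1
    | A2 => exact rank_nine _ mHi_A2 hinv_A2
    | A3 => exact rank_nine _ mHi_A3 hinv_A3
    | A4 => exact rank_nine _ mHi_A4 hinv_A4
    | B1 => exact rank_nine _ mHi_B1 hinv_B1
    | B2 => exact rank_nine _ mHi_B2 hinv_B2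
    | B3 => exact rank_nine _ mHi_B3 hinv_B3
    | B4 => exact rank_nine _ mHi_B4 hinv_B4
  · exact correct_of_cert _ _ _ _ mHi_A1 mHi_B1 mCv_A1B1 mCu_A1B1 hinv_A1 hinv_B1 (by decide) (by decide)
  · exact correct_of_cert _ _ _ _ mHi_A2 mHi_B1 mCv_A2B1 mCu_A2B1 hinv_A2 hinv_B1 (by decide) (by decide)
  · exact correct_of_cert _ _ _ _ mHi_A3 mHi_B1 mCv_A3B1 mCu_A3B1 hinv_A3 hinv_B1 (by decide) (by decide)
  · exact correct_of_cert _ _ _ _ mHi_A2 mHi_B2 mCv_A2B2 mCu_A2B2 hinv_A2 hinv_B2 (by decide) (by decide)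
  · exact correct_of_cert _ _ _ _ mHi_A3 mHi_B2 mCv_A3B2 mCu_A3B2 hinv_A3 hinv_B2 (by decide) (by decide)
  · exact correct_of_cert _ _ _ _ mHi_A3 mHi_B3 mCv_A3B3 mCu_A3B3 hinv_A3 hinv_B3 (by decide) (by decide)
  · exact correct_of_cert _ _ _ _ mHi_A4 mHi_B3 mCv_A4B3 mCu_A4B3 hinv_A4 hinv_B3 (by decide) (by decide)
  · exact correct_of_cert _ _ _ _ mHi_A4 mHi_B4 mCv_A4B4 mCu_A4B4 hinv_A4 hinv_B4 (by decide) (by decide)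
  · exact secure_of_cert _ _ _ _ mR_A1B2 (by decide) (by decide)
  · exact secure_of_cert _ _ _ _ mR_A1B3 (by decide) (by decide)
  · exact secure_of_cert _ _ _ _ mR_A2B3 (by decide) (by decide)
  · exact secure_of_cert _ _ _ _ mR_A2B4 (by decide) (by decide)
  · exact secure_of_cert _ _ _ _ mR_A3B4 (by decide) (by decide)
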